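/- Let S be an important X–Y separator in a directed graph G and let v ∈ S. Then S \ {v} is an important X–Y separator in the graph G \ {v}. -/

import Mathlib

variable {V : Type*}

/-- A single edge step in `G \ S`: an edge of `E` with both endpoints outside `S`. -/
def DStep (E : V → V → Prop) (S : Set V) (a b : V) : Prop :=
  E a b ∧ a ∉ S ∧ b ∉ S

/-- `b` is reachable from `a` by a directed path in `G \ S`. -/
def DReach (E : V → V → Prop) (S : Set V) (a b : V) : Prop :=
  Relation.ReflTransGen (DStep E S) a b

/-- The set of vertices reachable from the set `X` in `G \ S`. -/
def RSet (E : V → V → Prop) (S X : Set V) : Set V :=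
  {v | ∃ x ∈ X, DReach E S x v}

/-- `S` is an `X`–`Y` separator: disjoint from `X ∪ Y` and destroying all `X → Y` paths. -/
def IsSep (E : V → V → Prop) (X Y S : Set V) : Prop :=
  S ∩ (X ∪ Y) = ∅ ∧ ∀ x ∈ X, ∀ y ∈ Y, ¬ DReach E S x y

/-- `S` is an inclusion-wise minimal `X`–`Y` separator. -/
def IsMinSep (E : V → V → Prop) (X Y S : Set V) : Prop :=
  IsSep E X Y S ∧ ∀ S', S' ⊂ S → ¬ IsSep E X Y S'

/-- `S` is an important `X`–`Y` separator: a minimal separator such that no separator of at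
most the same size has a strictly larger set of vertices reachable from `X`. -/
def IsImpSep (E : V → V → Prop) (X Y S : Set V) : Prop :=
  IsMinSep E X Y S ∧
    ¬ ∃ S', IsSep E X Y S' ∧ S'.ncard ≤ S.ncard ∧ RSet E S X ⊂ RSet E S' X

/-- `S` is a (vertex) multiway cut of `(G, T)`. -/
def IsMWC (E : V → V → Prop) (T S : Set V) : Prop :=
  S ∩ T = ∅ ∧ ∀ t₁ ∈ T, ∀ t₂ ∈ T, t₁ ≠ t₂ → ¬ DReach E S t₁ t₂

/-- The forward shadow of `S` with respect to `T`: vertices outside `S ∪ T` not reachable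
from `T` in `G \ S`. -/
def fShadow (E : V → V → Prop) (T S : Set V) : Set V :=
  {v | v ∉ S ∧ v ∉ T ∧ ∀ t ∈ T, ¬ DReach E S t v}

/-- The reverse shadow of `S` with respect to `T`: vertices outside `S ∪ T` that cannot
reach `T` in `G \ S`. -/
def rShadow (E : V → V → Prop) (T S : Set V) : Set V :=
  {v | v ∉ S ∧ v ∉ T ∧ ∀ t ∈ T, ¬ DReach E S v t}

/-- The adjacency of `torso(G, C)`: an edge `(a, b)` whenever `a, b ∈ C` and `G` has a
directed `a → b` path whose internal vertices all lie outside `C`. -/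
def TorsoAdj (E : V → V → Prop) (C : Set V) (a b : V) : Prop :=
  a ∈ C ∧ b ∈ C ∧ ∃ w, E a w ∧ Relation.ReflTransGen (fun x y => x ∉ C ∧ E x y) w b

lemma dstep_eq (E : V → V → Prop) (v : V) (T : Set V) :
    DStep (fun a b => E a b ∧ a ≠ v ∧ b ≠ v) T = DStep E (insert v T) := by
  funext a b
  simp only [DStep, Set.mem_insert_iff, eq_iff_iff]
  tauto

lemma dreach_eq (E : V → V → Prop) (v : V) (T : Set V) :
    DReach (fun a b => E a b ∧ a ≠ v ∧ b ≠ v) T = DReach E (insert v T) := by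
  unfold DReach
  rw [dstep_eq]

lemma rset_eq (E : V → V → Prop) (v : V) (T X : Set V) :
    RSet (fun a b => E a b ∧ a ≠ v ∧ b ≠ v) T X = RSet E (insert v T) X := by
  unfold RSet
  rw [dreach_eq]

lemma isSep_iff' (E : V → V → Prop) (X Y : Set V) (v : V) (hv : v ∉ X ∪ Y) (T : Set V) :
    IsSep (fun a b => E a b ∧ a ≠ v ∧ b ≠ v) X Y T ↔ IsSep E X Y (insert v T) := by
  unfold IsSep
  rw [dreach_eq, Set.insert_inter_of_notMem hv]

/-- If `S` is an important `X`–`Y` separator and `v ∈ S`, then `S \ {v}` is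
an important `X`–`Y` separator in the graph `G \ {v}`. -/
theorem important_separator_delete_vertex (E : V → V → Prop) (X Y S : Set V)
    (hImp : IsImpSep E X Y S) (v : V) (hv : v ∈ S) :
    IsImpSep (fun a b => E a b ∧ a ≠ v ∧ b ≠ v) X Y (S \ {v}) := by
  obtain ⟨⟨hSep, hMin⟩, hImp2⟩ := hImp
  have hvXY : v ∉ X ∪ Y := by
    intro h
    have : v ∈ S ∩ (X ∪ Y) := ⟨hv, h⟩
    rw [hSep.1] at this
    exact this
  have hins : insert v (S \ {v}) = S := by
    rw [Set.insert_diff_singleton, Set.insert_eq_self.mpr hv]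
  have hsepd : IsSep (fun a b => E a b ∧ a ≠ v ∧ b ≠ v) X Y (S \ {v}) := by
    rw [isSep_iff' E X Y v hvXY, hins]; exact hSep
  refine ⟨⟨hsepd, ?_⟩, ?_⟩
  · -- minimality
    intro S'' hsub hS''
    rw [isSep_iff' E X Y v hvXY] at hS''
    obtain ⟨w, hwS, hwn⟩ := Set.exists_of_ssubset hsub
    refine hMin (insert v S'') ?_ hS''
    rw [Set.ssubset_def]
    constructor
    · intro a ha
      rcases Set.mem_insert_iff.mp ha with h | h
      · exact h ▸ hv
      · exact (hsub.1 h).1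
    · intro hcon
      have : w ∈ insert v S'' := hcon hwS.1
      rcases Set.mem_insert_iff.mp this with h | h
      · exact hwS.2 h
      · exact hwn h
  · -- importance
    rintro ⟨S', hS'sep, hcard, hlt⟩
    have hrsetS : RSet (fun a b => E a b ∧ a ≠ v ∧ b ≠ v) (S \ {v}) X = RSet E S X := by
      rw [rset_eq, hins]
    have hrsetS' : RSet (fun a b => E a b ∧ a ≠ v ∧ b ≠ v) S' X = RSet E (insert v S') X :=
      rset_eq E v S' X
    have hTsep : IsSep E X Y (insert v S') := (isSep_iff' E X Y v hvXY S').mp hS'sep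
    have hlt' : RSet E S X ⊂ RSet E (insert v S') X := by
      rw [← hrsetS, ← hrsetS']; exact hlt
    by_cases hfin : S.Finite
    · refine hImp2 ⟨insert v S', hTsep, ?_, hlt'⟩
      calc (insert v S').ncard ≤ S'.ncard + 1 := Set.ncard_insert_le v S'
        _ ≤ (S \ {v}).ncard + 1 := by omega
        _ = S.ncard := Set.ncard_diff_singleton_add_one hv hfin
    · have hS0 : S.ncard = 0 := Set.Infinite.ncard hfin
      by_cases hS'fin : S'.Finite
      · have hSd : (S \ {v}).ncard = 0 :=
          Set.Infinite.ncard (fun h => hfin (by rw [← hins]; exact h.insert v))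
        have : S' = ∅ := Set.ncard_eq_zero hS'fin |>.mp (by omega)
        subst this
        refine hMin {v} ?_ (by simpa using hTsep)
        rw [Set.ssubset_def]
        refine ⟨Set.singleton_subset_iff.mpr hv, fun hcon => hfin (Set.Finite.subset (Set.finite_singleton v) hcon)⟩
      · refine hImp2 ⟨insert v S', hTsep, ?_, hlt'⟩
        have : (insert v S').Infinite := fun h => hS'fin (h.subset (Set.subset_insert v S'))
        rw [this.ncard, hS0]
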